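/- Let Ψ : ℝ² → ℝ be defined by Ψ(x,y) = x - (1/(2π))·arcsin(sin(2πx)·(1 - e^{-y-2})). Then for every integer k and every y ≥ 0, if |x - k| ≤ 1/5 then |Ψ(x,y) - k| < e^{-y}·|x - k| (when x ≠ k; in general |Ψ(x,y) - k| ≤ e^{-y}·|x - k|). -/
import Mathlib

open Real

/-- On `[0, π]`, `sin s - sin r ≥ (s - r) cos s`. -/
lemma sin_sub_sin_ge {r s : ℝ} (hr : 0 ≤ r) (hrs : r ≤ s) (hs : s ≤ π) :
    (s - r) * Real.cos s ≤ Real.sin s - Real.sin r := by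
  have hmono : MonotoneOn (fun u : ℝ => Real.sin u - u * Real.cos s) (Set.Icc 0 s) := by
    apply monotoneOn_of_hasDerivWithinAt_nonneg (f' := fun u => Real.cos u - Real.cos s)
      (convex_Icc 0 s)
    · exact (Real.continuous_sin.sub (continuous_id.mul continuous_const)).continuousOn
    · intro u hu
      exact ((Real.hasDerivAt_sin u).sub (hasDerivAt_mul_const (Real.cos s))).hasDerivWithinAt
    · intro u hu
      rw [interior_Icc] at hu
      have : Real.cos s ≤ Real.cos u :=
        Real.cos_le_cos_of_nonneg_of_le_pi hu.1.le hs hu.2.le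
      linarith
  have h := hmono (Set.mem_Icc.2 ⟨hr, hrs⟩) (Set.mem_Icc.2 ⟨hr.trans hrs, le_refl s⟩) hrs
  simp only at h
  linarith

/-- Core estimate for nonnegative `t`. -/
lemma key_est (t y : ℝ) (hy : 0 ≤ y) (ht0 : 0 ≤ t) (ht : t ≤ 1 / 5) :
    0 ≤ t - (1 / (2 * π)) * Real.arcsin (Real.sin (2 * π * t) * (1 - Real.exp (-y - 2))) ∧
    t - (1 / (2 * π)) * Real.arcsin (Real.sin (2 * π * t) * (1 - Real.exp (-y - 2)))
      ≤ (3 / 4) * Real.exp (-y) * t := by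
  have hpi : 0 < π := Real.pi_pos
  have hpi2 : π < 3.15 := by have := Real.pi_lt_d2; linarith
  set s := 2 * π * t with hs_def
  set c := 1 - Real.exp (-y - 2) with hc_def
  have hE : Real.exp (-y - 2) = Real.exp (-y) * Real.exp (-2) := by
    rw [← Real.exp_add]; ring_nf
  have hexp2 : Real.exp (-2 : ℝ) ≤ 3 / 20 := by
    have h1 : (2.7182818283 : ℝ) < Real.exp 1 := Real.exp_one_gt_d9
    have h2 : Real.exp 2 = Real.exp 1 * Real.exp 1 := by rw [← Real.exp_add]; norm_num
    have h3 : (20 : ℝ) / 3 ≤ Real.exp 2 := by nlinarith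
    rw [Real.exp_neg]
    calc (Real.exp 2)⁻¹ ≤ ((20 : ℝ) / 3)⁻¹ := by
          apply inv_anti₀ (by norm_num) h3
      _ = 3 / 20 := by norm_num
  have hEy : Real.exp (-y) ≤ 1 := Real.exp_le_one_iff.2 (by linarith)
  have hEpos : 0 < Real.exp (-y - 2) := Real.exp_pos _
  have hc0 : 0 ≤ c := by
    have : Real.exp (-y - 2) ≤ 1 := Real.exp_le_one_iff.2 (by linarith)
    simp [hc_def]; linarith
  have hc1 : c ≤ 1 := by simp [hc_def]; positivity
  have hs0 : 0 ≤ s := by positivity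
  have hs2 : s ≤ π / 2 := by
    have : s ≤ 2 * π * (1 / 5) := by
      apply mul_le_mul_of_nonneg_left ht (by positivity)
    linarith
  have hsin0 : 0 ≤ Real.sin s := Real.sin_nonneg_of_nonneg_of_le_pi hs0 (by linarith)
  have hsin1 : Real.sin s ≤ 1 := Real.sin_le_one s
  have hsins : Real.sin s ≤ s := Real.sin_le hs0
  have hcs0 : 0 ≤ Real.sin s * c := mul_nonneg hsin0 hc0
  have hcs1 : Real.sin s * c ≤ Real.sin s := by nlinarith
  set r := Real.arcsin (Real.sin s * c) with hr_def
  have hr0 : 0 ≤ r := Real.arcsin_nonneg.2 hcs0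
  have hrs : r ≤ s := by
    have h1 : r ≤ Real.arcsin (Real.sin s) := Real.monotone_arcsin hcs1
    rwa [Real.arcsin_sin (by linarith) hs2] at h1
  have hsinr : Real.sin r = Real.sin s * c :=
    Real.sin_arcsin (by linarith) (by linarith)
  -- cos s lower bound
  have hcos : (1 : ℝ) / 5 ≤ Real.cos s := by
    have h1 : 1 - s ^ 2 / 2 ≤ Real.cos s := Real.one_sub_sq_div_two_le_cos
    have hsle : s ≤ 1.26 := by
      have : s ≤ 2 * π * (1 / 5) := mul_le_mul_of_nonneg_left ht (by positivity)
      nlinarith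
    nlinarith
  -- main estimate
  have hA : (s - r) * Real.cos s ≤ Real.sin s - Real.sin r :=
    sin_sub_sin_ge hr0 hrs (by linarith)
  have hB : Real.sin s - Real.sin r = Real.sin s * Real.exp (-y - 2) := by
    rw [hsinr, hc_def]; ring
  have hsr : s - r ≤ 5 * (s * Real.exp (-y - 2)) := by
    have h1 : (s - r) * (1 / 5) ≤ (s - r) * Real.cos s :=
      mul_le_mul_of_nonneg_left hcos (by linarith)
    have h2 : Real.sin s * Real.exp (-y - 2) ≤ s * Real.exp (-y - 2) :=
      mul_le_mul_of_nonneg_right hsins hEpos.le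
    nlinarith
  have heq : t - (1 / (2 * π)) * r = (s - r) / (2 * π) := by
    field_simp [hs_def]; ring
  constructor
  · rw [heq]; exact div_nonneg (by linarith) (by positivity)
  · rw [heq]
    have h5 : 5 * (s * Real.exp (-y - 2)) ≤ (3 / 4) * Real.exp (-y) * s := by
      rw [hE]
      nlinarith [mul_nonneg (mul_nonneg hs0 (Real.exp_pos (-y)).le) (sub_nonneg.2 hexp2)]
    rw [div_le_iff₀ (by positivity)]
    have h6 : (3 / 4) * Real.exp (-y) * s = (3 / 4) * Real.exp (-y) * t * (2 * π) := by
      rw [hs_def]; ring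
    linarith

lemma key_abs (t y : ℝ) (hy : 0 ≤ y) (ht : |t| ≤ 1 / 5) :
    |t - (1 / (2 * π)) * Real.arcsin (Real.sin (2 * π * t) * (1 - Real.exp (-y - 2)))|
      ≤ (3 / 4) * Real.exp (-y) * |t| := by
  rcases le_or_gt 0 t with h | h
  · rw [abs_of_nonneg h] at ht ⊢
    obtain ⟨h1, h2⟩ := key_est t y hy h ht
    rw [abs_of_nonneg h1]; exact h2
  · rw [abs_of_neg h] at ht ⊢
    obtain ⟨h1, h2⟩ := key_est (-t) y hy (by linarith) ht
    have hodd : -t - (1 / (2 * π)) * Real.arcsin (Real.sin (2 * π * -t) * (1 - Real.exp (-y - 2)))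
        = -(t - (1 / (2 * π)) * Real.arcsin (Real.sin (2 * π * t) * (1 - Real.exp (-y - 2)))) := by
      rw [show 2 * π * -t = -(2 * π * t) by ring, Real.sin_neg, neg_mul, Real.arcsin_neg]
      ring
    rw [hodd] at h1 h2
    rw [abs_of_nonpos (by linarith)]
    linarith

noncomputable def Psi (x y : ℝ) : ℝ :=
  x - (1 / (2 * Real.pi)) * Real.arcsin (Real.sin (2 * Real.pi * x) * (1 - Real.exp (-y - 2)))

theorem stmt_0 (x y : ℝ) (k : ℤ) (hy : 0 ≤ y) (hx : |x - k| ≤ 1 / 5) :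
    (x ≠ (k : ℝ) → |Psi x y - k| < Real.exp (-y) * |x - k|) ∧
    |Psi x y - k| ≤ Real.exp (-y) * |x - k| := by
  have hsin : Real.sin (2 * π * x) = Real.sin (2 * π * (x - k)) := by
    rw [show 2 * π * x = 2 * π * (x - k) + (k : ℤ) * (2 * π) by push_cast; ring]
    exact Real.sin_add_int_mul_two_pi _ k
  have hPsi : Psi x y - k
      = (x - k) - (1 / (2 * π)) * Real.arcsin (Real.sin (2 * π * (x - k)) * (1 - Real.exp (-y - 2))) := by
    rw [Psi, hsin]; ring
  have key := key_abs (x - k) y hy hx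
  rw [← hPsi] at key
  have hEpos : 0 < Real.exp (-y) := Real.exp_pos _
  constructor
  · intro hne
    have habs : 0 < |x - k| := abs_pos.2 (sub_ne_zero.2 hne)
    calc |Psi x y - k| ≤ (3 / 4) * Real.exp (-y) * |x - k| := key
      _ < Real.exp (-y) * |x - k| := by nlinarith
  · calc |Psi x y - k| ≤ (3 / 4) * Real.exp (-y) * |x - k| := key
      _ ≤ Real.exp (-y) * |x - k| := by nlinarith [abs_nonneg (x - (k:ℝ))]
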